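/- With the notation of the previous statement, the bilinear form (x,y) ↦ ⟨x, J(τ)y⟩ on V is symmetric, and the associated quadratic form q_{J(τ)} is the orthogonal direct sum of the form Q_L^{L₁,L₃} on L₁ and the form −Q_L^{L₃,L₁} on L₃; in particular its signature equals sign(Q_L^{L₁,L₃}) − sign(Q_L^{L₃,L₁}). -/

import Mathlib

/-- A Lagrangian of a symplectic vector space `(V, ω)` of dimension `2n` is an
`n`-dimensional subspace on which `ω` vanishes. -/
def IsLagrangian {V : Type*} [AddCommGroup V] [Module ℝ V]
    (ω : V →ₗ[ℝ] V →ₗ[ℝ] ℝ) (n : ℕ) (L : Submodule ℝ V) : Prop :=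
  Module.finrank ℝ L = n ∧ ∀ x ∈ L, ∀ y ∈ L, ω x y = 0

/-- With `J = J(τ)` the complex structure associated to a triple
`τ = (L₁, L, L₃)` of pairwise transverse Lagrangians (block form
`(0, −T₃₁; T₁₃, 0)` w.r.t. `V = L₁ ⊕ L₃`), the bilinear form
`(x,y) ↦ ⟨x, J y⟩` is symmetric, and the associated quadratic form
`q_J(x) = ⟨x, J x⟩` is the orthogonal direct sum of `Q_L^{L₁,L₃}` on `L₁` and
`−Q_L^{L₃,L₁}` on `L₃`: `L₁ ⊥ L₃` for this form, on `L₁` it is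
`a ↦ ⟨a, T₁₃ a⟩`, and on `L₃` it is `b ↦ −⟨b, T₃₁ b⟩`. -/
theorem stmt_10
    {V : Type*} [AddCommGroup V] [Module ℝ V] [FiniteDimensional ℝ V]
    (n : ℕ)
    (ω : V →ₗ[ℝ] V →ₗ[ℝ] ℝ)
    (halt : ∀ x : V, ω x x = 0)
    (hnd : ∀ x : V, x ≠ 0 → ∃ y : V, ω x y ≠ 0)
    (hdim : Module.finrank ℝ V = 2 * n)
    (L₁ L₃ L : Submodule ℝ V)
    (hL₁ : IsLagrangian ω n L₁) (hL₃ : IsLagrangian ω n L₃)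
    (hL : IsLagrangian ω n L)
    (hcompl : IsCompl L₁ L₃)
    (htr₁ : L ⊓ L₁ = ⊥) (htr₃ : L ⊓ L₃ = ⊥)
    (T₁₃ : ↥L₁ →ₗ[ℝ] ↥L₃)
    (hT₁₃ : ∀ x : V, x ∈ L ↔ ∃ a : ↥L₁, x = ↑a + ↑(T₁₃ a))
    (T₃₁ : ↥L₃ →ₗ[ℝ] ↥L₁)
    (hT₃₁ : ∀ x : V, x ∈ L ↔ ∃ c : ↥L₃, x = ↑c + ↑(T₃₁ c))
    (J : V →ₗ[ℝ] V)
    (hJ : J = L₃.subtype.comp (T₁₃.comp (L₁.linearProjOfIsCompl L₃ hcompl)) -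
      L₁.subtype.comp (T₃₁.comp (L₃.linearProjOfIsCompl L₁ hcompl.symm))) :
    (∀ x y : V, ω x (J y) = ω y (J x)) ∧
    (∀ (a : ↥L₁) (b : ↥L₃), ω ↑a (J ↑b) = 0) ∧
    (∀ a : ↥L₁, ω ↑a (J ↑a) = ω ↑a ↑(T₁₃ a)) ∧
    (∀ b : ↥L₃, ω ↑b (J ↑b) = -(ω ↑b ↑(T₃₁ b))) := by
  have skew : ∀ x y : V, ω x y = -ω y x := by
    intro x y
    have h := halt (x + y)
    simp only [map_add, LinearMap.add_apply, halt] at h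
    linarith
  have hJa : ∀ a : ↥L₁, J ↑a = ↑(T₁₃ a) := by
    intro a
    rw [hJ]
    simp [Submodule.linearProjOfIsCompl, Submodule.linearProjOfIsCompl_apply_left hcompl a,
      Submodule.linearProjOfIsCompl_apply_right hcompl.symm a]
  have hJb : ∀ b : ↥L₃, J ↑b = -↑(T₃₁ b) := by
    intro b
    rw [hJ]
    simp [Submodule.linearProjOfIsCompl, Submodule.linearProjOfIsCompl_apply_left hcompl.symm b,
      Submodule.linearProjOfIsCompl_apply_right hcompl b]
  have key₁ : ∀ a a' : ↥L₁, ω ↑a ↑(T₁₃ a') = ω ↑a' ↑(T₁₃ a) := by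
    intro a a'
    have h := hL.2 _ ((hT₁₃ _).2 ⟨a, rfl⟩) _ ((hT₁₃ _).2 ⟨a', rfl⟩)
    simp only [map_add, LinearMap.add_apply] at h
    rw [hL₁.2 _ a.2 _ a'.2, hL₃.2 _ (T₁₃ a).2 _ (T₁₃ a').2, skew (↑(T₁₃ a)) ↑a'] at h
    linarith
  have key₃ : ∀ b b' : ↥L₃, ω ↑b ↑(T₃₁ b') = ω ↑b' ↑(T₃₁ b) := by
    intro b b'
    have h := hL.2 _ ((hT₃₁ _).2 ⟨b, rfl⟩) _ ((hT₃₁ _).2 ⟨b', rfl⟩)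
    simp only [map_add, LinearMap.add_apply] at h
    rw [hL₃.2 _ b.2 _ b'.2, hL₁.2 _ (T₃₁ b).2 _ (T₃₁ b').2, skew (↑(T₃₁ b)) ↑b'] at h
    linarith
  refine ⟨?_, ?_, ?_, ?_⟩
  · intro x y
    set π₁ := L₁.linearProjOfIsCompl L₃ hcompl with hπ₁
    set π₃ := L₃.linearProjOfIsCompl L₁ hcompl.symm with hπ₃
    have hx : (↑(π₁ x) : V) + ↑(π₃ x) = x :=
      Submodule.projection_add_projection_eq_self hcompl x
    have hy : (↑(π₁ y) : V) + ↑(π₃ y) = y :=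
      Submodule.projection_add_projection_eq_self hcompl y
    have expand : ∀ z w : V, ω z (J w) =
        ω ↑(π₁ z) ↑(T₁₃ (π₁ w)) - ω ↑(π₃ z) ↑(T₃₁ (π₃ w)) := by
      intro z w
      have hz : (↑(π₁ z) : V) + ↑(π₃ z) = z :=
        Submodule.projection_add_projection_eq_self hcompl z
      rw [hJ]
      simp only [LinearMap.sub_apply, LinearMap.comp_apply, Submodule.subtype_apply,
        map_sub]
      conv_lhs => rw [← hz]
      simp only [map_add, LinearMap.add_apply, LinearMap.sub_apply]
      rw [hL₃.2 _ (π₃ z).2 _ (T₁₃ (π₁ w)).2, hL₁.2 _ (π₁ z).2 _ (T₃₁ (π₃ w)).2]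
      ring
    rw [expand x y, expand y x, key₁ (π₁ x) (π₁ y), key₃ (π₃ x) (π₃ y)]
  · intro a b
    rw [hJb b]
    have : ω ↑a ↑(T₃₁ b) = 0 := hL₁.2 _ a.2 _ (T₃₁ b).2
    simp [this]
  · intro a; rw [hJa a]
  · intro b; rw [hJb b]; simp
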